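/- Let m, k be odd positive integers with gcd(m,k) = 1, n = 2m, and suppose τ, λ, μ ∈ F_{2^n} satisfy λ ∈ F_{2^m}, 1 + τ + τ̄ ≠ 0, λ^{2^k - 1} = 1 + τ + τ̄, μ^{2^k} + μ = τλ, and μ + μ̄ = λ (where x̄ = x^{2^m}). Then the set of solutions in F_{2^n} of x^{2^k} + τ·x̄ + (τ+1)·x = 0 is exactly {0, 1, μ, μ+1}. -/

import Mathlib

section Aux

variable {F : Type*} [Field F] [CharP F 2]

lemma aux_inj (n : ℕ) {a b : F} (h : a ^ 2 ^ n = b ^ 2 ^ n) : a = b := by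
  have h2 : (a - b) ^ 2 ^ n = 0 := by
    rw [sub_pow_char_pow, h, sub_self]
  have := pow_eq_zero_iff (n := 2 ^ n) (by positivity) |>.mp h2
  exact sub_eq_zero.mp this

lemma aux_mul (a q : ℕ) {x : F} (h : x ^ 2 ^ a = x) : x ^ 2 ^ (a * q) = x := by
  induction q with
  | zero => simp
  | succ q ih => rw [Nat.mul_succ, pow_add, pow_mul, ih, h]

lemma aux_gcd : ∀ a b : ℕ, ∀ x : F, x ^ 2 ^ a = x → x ^ 2 ^ b = x → x ^ 2 ^ Nat.gcd a b = x := by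
  intro a b
  induction a, b using Nat.gcd.induction with
  | H0 b => intro x _ hb; simpa using hb
  | H1 a b ha ih =>
    intro x hxa hxb
    rw [Nat.gcd_rec]
    refine ih x ?_ hxa
    have hb' : x ^ 2 ^ (a * (b / a)) = x := aux_mul a _ hxa
    apply aux_inj (a * (b / a))
    rw [← pow_mul, ← pow_add, Nat.mod_add_div b a, hxb, hb']

lemma aux_two_cases {x : F} (h : x ^ 2 = x) : x = 0 ∨ x = 1 := by
  have : x * (x - 1) = 0 := by linear_combination h
  rcases mul_eq_zero.mp this with h | h
  · exact Or.inl h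
  · exact Or.inr (sub_eq_zero.mp h)

end Aux

/-- Lemma 3 (last part): if `λ ∈ F_{2^m}` with `1 + τ + τ̄ ≠ 0`, `λ^{2^k-1} = 1 + τ + τ̄`,
`μ^{2^k} + μ = τλ` and `μ + μ̄ = λ`, then the solution set of `x^{2^k} + τ·x̄ + (τ+1)·x = 0`
in `F_{2^n}` (`n = 2m`) is `{0, 1, μ, μ+1}`. -/
theorem stmt_3 (m k : ℕ) (hm : Odd m) (hk : Odd k) (hm0 : 0 < m) (hk0 : 0 < k)
    (hgcd : Nat.gcd m k = 1) (τ lam μ : GaloisField 2 (2 * m))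
    (hlam : lam ^ 2 ^ m = lam)
    (hne : 1 + τ + τ ^ 2 ^ m ≠ 0)
    (hlameq : lam ^ (2 ^ k - 1) = 1 + τ + τ ^ 2 ^ m)
    (hmu : μ ^ 2 ^ k + μ = τ * lam)
    (hmul : μ + μ ^ 2 ^ m = lam) :
    {x : GaloisField 2 (2 * m) | x ^ 2 ^ k + τ * x ^ 2 ^ m + (τ + 1) * x = 0} =
      {0, 1, μ, μ + 1} := by
  have h2 : (2 : GaloisField 2 (2 * m)) = 0 := by
    exact_mod_cast CharP.cast_eq_zero (GaloisField 2 (2 * m)) 2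
  have hadd : ∀ (a b : GaloisField 2 (2 * m)) (j : ℕ),
      (a + b) ^ 2 ^ j = a ^ 2 ^ j + b ^ 2 ^ j := fun a b j =>
    add_pow_char_pow a b 2 j
  have hcard : ∀ a : GaloisField 2 (2 * m), a ^ 2 ^ (2 * m) = a := by
    letI : Fintype (GaloisField 2 (2 * m)) := Fintype.ofFinite _
    intro a
    have h1 : Fintype.card (GaloisField 2 (2 * m)) = 2 ^ (2 * m) := by
      rw [← Nat.card_eq_fintype_card, GaloisField.card 2 (2 * m) (by omega)]
    rw [← h1]; exact FiniteField.pow_card a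
  have hmm : ∀ a : GaloisField 2 (2 * m), (a ^ 2 ^ m) ^ 2 ^ m = a := by
    intro a
    rw [← pow_mul, ← pow_add, ← two_mul, hcard]
  have hlam0 : lam ≠ 0 := by
    intro h
    apply hne
    rw [← hlameq, h, zero_pow]
    exact Nat.sub_ne_zero_of_lt (Nat.one_lt_two_pow_iff.mpr (by omega))
  have hpowk : lam ^ (2 ^ k - 1) * lam = lam ^ 2 ^ k := by
    rw [← pow_succ, Nat.sub_add_cancel Nat.one_le_two_pow]
  have hmusol : μ ^ 2 ^ k + τ * μ ^ 2 ^ m + (τ + 1) * μ = 0 := by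
    linear_combination hmu + τ * hmul + (τ * lam) * h2
  ext x
  simp only [Set.mem_setOf_eq, Set.mem_insert_iff, Set.mem_singleton_iff]
  constructor
  · intro hx
    have hxc : (x ^ 2 ^ m) ^ 2 ^ k + τ ^ 2 ^ m * x + (τ ^ 2 ^ m + 1) * x ^ 2 ^ m = 0 := by
      have h0 : (x ^ 2 ^ k + τ * x ^ 2 ^ m + (τ + 1) * x) ^ 2 ^ m = 0 := by
        rw [hx]; exact zero_pow (by positivity)
      rw [hadd, hadd, mul_pow, mul_pow, hadd, one_pow, hmm x] at h0
      have hswap : (x ^ 2 ^ k) ^ 2 ^ m = (x ^ 2 ^ m) ^ 2 ^ k := by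
        rw [← pow_mul, ← pow_mul]
        exact congrArg (x ^ ·) (Nat.mul_comm _ _)
      rw [hswap] at h0
      linear_combination h0
    have hyk : (x + x ^ 2 ^ m) ^ 2 ^ k = lam ^ (2 ^ k - 1) * (x + x ^ 2 ^ m) := by
      rw [hadd, hlameq]
      linear_combination hx + hxc -
        (x + x ^ 2 ^ m + τ * x + τ * x ^ 2 ^ m + τ ^ 2 ^ m * x + τ ^ 2 ^ m * x ^ 2 ^ m) * h2
    have hym : (x + x ^ 2 ^ m) ^ 2 ^ m = x + x ^ 2 ^ m := by
      rw [hadd, hmm x]; exact add_comm _ _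
    have hzk : ((x + x ^ 2 ^ m) * lam⁻¹) ^ 2 ^ k = (x + x ^ 2 ^ m) * lam⁻¹ := by
      rw [mul_pow, hyk, inv_pow, ← hpowk]
      field_simp
    have hzm : ((x + x ^ 2 ^ m) * lam⁻¹) ^ 2 ^ m = (x + x ^ 2 ^ m) * lam⁻¹ := by
      rw [mul_pow, hym, inv_pow, hlam]
    have hz2 : ((x + x ^ 2 ^ m) * lam⁻¹) ^ 2 = (x + x ^ 2 ^ m) * lam⁻¹ := by
      have := aux_gcd m k _ hzm hzk
      rwa [hgcd, pow_one] at this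
    rcases aux_two_cases hz2 with hz0 | hz1
    · have hy0 : x + x ^ 2 ^ m = 0 := by
        rcases mul_eq_zero.mp hz0 with h | h
        · exact h
        · exact absurd h (inv_ne_zero hlam0)
      have hxm : x ^ 2 ^ m = x := by linear_combination hy0 - x * h2
      have hxk : x ^ 2 ^ k = x := by
        rw [hxm] at hx
        linear_combination hx - (x + τ * x) * h2
      have : x ^ 2 = x := by
        have := aux_gcd m k x hxm hxk
        rwa [hgcd, pow_one] at this
      rcases aux_two_cases this with h | h
      · exact Or.inl h
      · exact Or.inr (Or.inl h)
    · have hyl : x + x ^ 2 ^ m = lam := (mul_inv_eq_one₀ hlam0).mp hz1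
      have hxm : x ^ 2 ^ m = x + lam := by linear_combination hyl - x * h2
      have hmum : μ ^ 2 ^ m = μ + lam := by linear_combination hmul - μ * h2
      have hwm : (x + μ) ^ 2 ^ m = x + μ := by
        rw [hadd, hxm, hmum]
        linear_combination lam * h2
      have hwk : (x + μ) ^ 2 ^ k = x + μ := by
        rw [hadd]
        have hxk : x ^ 2 ^ k = x + τ * lam := by
          rw [hxm] at hx
          linear_combination hx - (x + τ * x + τ * lam) * h2
        have hmuk : μ ^ 2 ^ k = μ + τ * lam := by
          linear_combination hmu - μ * h2
        rw [hxk, hmuk]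
        linear_combination (τ * lam) * h2
      have : (x + μ) ^ 2 = x + μ := by
        have := aux_gcd m k _ hwm hwk
        rwa [hgcd, pow_one] at this
      rcases aux_two_cases this with h | h
      · exact Or.inr (Or.inr (Or.inl (by linear_combination h - μ * h2)))
      · exact Or.inr (Or.inr (Or.inr (by linear_combination h - μ * h2)))
  · have hkne : (2 : ℕ) ^ k ≠ 0 := by positivity
    have hmne : (2 : ℕ) ^ m ≠ 0 := by positivity
    rintro (rfl | rfl | rfl | rfl)
    · simp [zero_pow hkne, zero_pow hmne]
    · simp only [one_pow, mul_one]
      linear_combination (1 + τ) * h2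
    · exact hmusol
    · rw [hadd, hadd, one_pow, one_pow]
      linear_combination hmusol + (1 + τ) * h2
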